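/- Let O₀ = k[[s, ε]]/(ε²) over a field k, and for n ≥ 1 let I_n be the ideal (s^n, ε) of O₀. Then the complex ... → O₀² → O₀² → O₀² → I_n → 0, with every differential given by the matrix [[ε, s^n], [0, −ε]] and augmentation (a, b) ↦ a·ε + b·s^n, is a free resolution of I_n, and dim_k Ext¹_{O₀}(I_n, I_n) = 2n. -/

import Mathlib

set_option maxHeartbeats 1000000
set_option synthInstance.maxHeartbeats 1000000

open TrivSqZeroExt

/-- the middle homology `ker f / im f` of the 2-periodic complex with differential `f` -/
noncomputable def HomologyOf {R M : Type} [CommRing R] [AddCommGroup M] [Module R M]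
    (f : M →ₗ[R] M) : Type :=
  ↥(LinearMap.ker f) ⧸ Submodule.comap (LinearMap.ker f).subtype (LinearMap.range f)

noncomputable instance {R M : Type} [CommRing R] [AddCommGroup M] [Module R M]
    (f : M →ₗ[R] M) : AddCommGroup (HomologyOf f) :=
  inferInstanceAs (AddCommGroup (_ ⧸ _))

noncomputable instance {R M : Type} [CommRing R] [AddCommGroup M] [Module R M]
    (f : M →ₗ[R] M) (S : Type) [CommRing S] [Algebra S R] : Module S (HomologyOf f) :=
  Module.compHom (↥(LinearMap.ker f) ⧸
    Submodule.comap (LinearMap.ker f).subtype (LinearMap.range f)) (algebraMap S R)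


/-- `O₀ = k[[s, ε]]/(ε²)`, modelled as the dual numbers over `k[[s]]`. -/
abbrev RibbonLocalRing (k : Type) [Field k] : Type := DualNumber (PowerSeries k)

/-- the element `s` of `O₀` -/
noncomputable def sElt (k : Type) [Field k] : RibbonLocalRing k := inl PowerSeries.X

/-- the element `ε` of `O₀` -/
noncomputable def epsElt (k : Type) [Field k] : RibbonLocalRing k := DualNumber.eps

/-- the ideal `I_n = (sⁿ, ε)` of `O₀` -/
noncomputable def In (k : Type) [Field k] (n : ℕ) : Ideal (RibbonLocalRing k) :=
  Ideal.span {sElt k ^ n, epsElt k}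

/-- the differential `O₀² → O₀²` given by the matrix `[[ε, sⁿ], [0, -ε]]`:
`(a, b) ↦ (ε a + sⁿ b, -ε b)`. -/
noncomputable def resDiff (k : Type) [Field k] (n : ℕ) :
    (RibbonLocalRing k × RibbonLocalRing k) →ₗ[RibbonLocalRing k]
      (RibbonLocalRing k × RibbonLocalRing k) :=
  LinearMap.prod
    ((epsElt k • LinearMap.id).comp (LinearMap.fst _ _ _) +
      ((sElt k ^ n) • LinearMap.id).comp (LinearMap.snd _ _ _))
    (-((epsElt k • LinearMap.id).comp (LinearMap.snd _ _ _)))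

/-- the augmentation `O₀² → O₀`, `(a, b) ↦ a ε + b sⁿ`, with image `I_n` (the generators
`e = sⁿ` and `f = ε` of `I_n` are listed in the order matching the matrix above). -/
noncomputable def resAug (k : Type) [Field k] (n : ℕ) :
    (RibbonLocalRing k × RibbonLocalRing k) →ₗ[RibbonLocalRing k] RibbonLocalRing k :=
  (epsElt k • LinearMap.id).comp (LinearMap.fst _ _ _) +
    ((sElt k ^ n) • LinearMap.id).comp (LinearMap.snd _ _ _)

/-- the induced differential on `Hom(O₀², I_n) ≅ I_n × I_n`:
`(x, y) ↦ (ε x, sⁿ x - ε y)`, i.e. the transpose of `[[ε, sⁿ], [0, -ε]]` applied to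
`I_n`-valued homomorphisms.  `Ext¹(I_n, I_n)` is its middle homology. -/
noncomputable def extDiff (k : Type) [Field k] (n : ℕ) :
    (In k n × In k n) →ₗ[RibbonLocalRing k] (In k n × In k n) :=
  LinearMap.prod
    ((epsElt k • LinearMap.id).comp (LinearMap.fst _ _ _))
    (((sElt k ^ n) • LinearMap.id).comp (LinearMap.fst _ _ _) -
      (epsElt k • LinearMap.id).comp (LinearMap.snd _ _ _))

/-- `Ext¹_{O₀}(I_n, I_n)`, computed from the 2-periodic free resolution of `I_n`. -/
noncomputable abbrev Ext1In (k : Type) [Field k] (n : ℕ) : Type :=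
  HomologyOf (extDiff k n)


noncomputable def homologyMk {R M : Type} [CommRing R] [AddCommGroup M] [Module R M]
    {f : M →ₗ[R] M} (z : ↥(LinearMap.ker f)) : HomologyOf f :=
  Submodule.Quotient.mk z

lemma homology_smul_mk {R M : Type} [CommRing R] [AddCommGroup M] [Module R M]
    (f : M →ₗ[R] M) (S : Type) [CommRing S] [Algebra S R] (c : S)
    (z : ↥(LinearMap.ker f)) :
    c • homologyMk (f := f) z = homologyMk (f := f) (algebraMap S R c • z) := by
  show Submodule.Quotient.mk _ = _
  rw [Submodule.Quotient.mk_smul]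
  rfl

lemma homology_mk_add {R M : Type} [CommRing R] [AddCommGroup M] [Module R M]
    (f : M →ₗ[R] M) (z w : ↥(LinearMap.ker f)) :
    homologyMk (f := f) (z + w) = homologyMk (f := f) z + homologyMk (f := f) w :=
  Submodule.Quotient.mk_add _

lemma homology_mk_surjective {R M : Type} [CommRing R] [AddCommGroup M] [Module R M]
    (f : M →ₗ[R] M) : Function.Surjective (homologyMk (f := f)) :=
  Submodule.Quotient.mk_surjective _

lemma homology_mk_eq_zero_iff {R M : Type} [CommRing R] [AddCommGroup M] [Module R M]
    (f : M →ₗ[R] M) (z : ↥(LinearMap.ker f)) :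
    homologyMk (f := f) z = 0 ↔
      z ∈ Submodule.comap (LinearMap.ker f).subtype (LinearMap.range f) :=
  Submodule.Quotient.mk_eq_zero _

lemma homology_mk_eq_iff {R M : Type} [CommRing R] [AddCommGroup M] [Module R M]
    (f : M →ₗ[R] M) (z w : ↥(LinearMap.ker f)) :
    homologyMk (f := f) z = homologyMk (f := f) w ↔
      z - w ∈ Submodule.comap (LinearMap.ker f).subtype (LinearMap.range f) :=
  Submodule.Quotient.eq _


section Aux
variable (k : Type) [Field k] (n : ℕ)

open PowerSeries

lemma sElt_pow : sElt k ^ n = inl ((X : PowerSeries k) ^ n) := by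
  rw [sElt, inl_pow]

lemma eps_mul_fst (a : RibbonLocalRing k) : (epsElt k * a).fst = 0 := by
  rw [epsElt, fst_mul, DualNumber.fst_eps, zero_mul]

lemma eps_mul_snd (a : RibbonLocalRing k) : (epsElt k * a).snd = a.fst := by
  rw [epsElt, snd_mul, DualNumber.fst_eps, DualNumber.snd_eps]
  simp [op_smul_eq_mul]

lemma sn_mul_fst (a : RibbonLocalRing k) :
    (sElt k ^ n * a).fst = X ^ n * a.fst := by
  rw [sElt_pow, fst_mul, fst_inl]

lemma sn_mul_snd (a : RibbonLocalRing k) :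
    (sElt k ^ n * a).snd = X ^ n * a.snd := by
  rw [sElt_pow, snd_mul, fst_inl, snd_inl]
  simp [op_smul_eq_mul, smul_eq_mul]

lemma resAug_apply (a b : RibbonLocalRing k) :
    resAug k n (a, b) = epsElt k * a + sElt k ^ n * b := by
  simp only [resAug, LinearMap.add_apply, LinearMap.comp_apply, LinearMap.fst_apply,
    LinearMap.snd_apply, LinearMap.smul_apply, LinearMap.id_apply, smul_eq_mul]

lemma resDiff_apply (a b : RibbonLocalRing k) :
    resDiff k n (a, b) = (epsElt k * a + sElt k ^ n * b, -(epsElt k * b)) := by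
  simp only [resDiff, LinearMap.prod_apply, Function.prod, LinearMap.add_apply, LinearMap.neg_apply,
    LinearMap.comp_apply, LinearMap.fst_apply, LinearMap.snd_apply, LinearMap.smul_apply,
    LinearMap.id_apply, smul_eq_mul]

lemma extDiff_apply (x y : ↥(In k n)) :
    extDiff k n (x, y) = (epsElt k • x, sElt k ^ n • x - epsElt k • y) := by
  simp only [extDiff, LinearMap.prod_apply, Function.prod, LinearMap.sub_apply,
    LinearMap.comp_apply, LinearMap.fst_apply, LinearMap.snd_apply, LinearMap.smul_apply,
    LinearMap.id_apply]

lemma mem_In_iff (z : RibbonLocalRing k) :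
    z ∈ In k n ↔ ∃ c : PowerSeries k, z.fst = X ^ n * c := by
  rw [In, Ideal.mem_span_pair]
  constructor
  · rintro ⟨a, b, rfl⟩
    refine ⟨a.fst, ?_⟩
    rw [fst_add, fst_mul, fst_mul, sElt_pow, fst_inl, epsElt, DualNumber.fst_eps,
      mul_zero, add_zero, mul_comm]
  · rintro ⟨c, hc⟩
    refine ⟨inl c, inl z.snd, ?_⟩
    refine TrivSqZeroExt.ext ?_ ?_
    · rw [fst_add, fst_mul, fst_mul, sElt_pow, fst_inl, fst_inl, fst_inl, epsElt,
        DualNumber.fst_eps, mul_zero, add_zero, hc, mul_comm]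
    · rw [snd_add, snd_mul, snd_mul, sElt_pow, fst_inl, fst_inl, snd_inl, snd_inl, epsElt,
        DualNumber.fst_eps, DualNumber.snd_eps]
      simp [op_smul_eq_mul]

end Aux

section Goals
variable (k : Type) [Field k] (n : ℕ)
open PowerSeries

lemma Xn_ne_zero : (X : PowerSeries k) ^ n ≠ 0 := pow_ne_zero _ X_ne_zero

lemma goal1 : LinearMap.range (resAug k n) = (In k n : Submodule (RibbonLocalRing k)
    (RibbonLocalRing k)) := by
  ext z
  rw [LinearMap.mem_range]
  constructor
  · rintro ⟨⟨a, b⟩, rfl⟩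
    rw [mem_In_iff]
    refine ⟨b.fst, ?_⟩
    rw [resAug_apply, fst_add, eps_mul_fst, sn_mul_fst, zero_add]
  · intro hz
    rw [mem_In_iff] at hz
    obtain ⟨c, hc⟩ := hz
    refine ⟨(inl z.snd, inl c), ?_⟩
    rw [resAug_apply]
    refine TrivSqZeroExt.ext ?_ ?_
    · rw [fst_add, eps_mul_fst, sn_mul_fst, fst_inl, zero_add, hc]
    · rw [snd_add, eps_mul_snd, sn_mul_snd, fst_inl, snd_inl, mul_zero, add_zero]

lemma diff_mem_ker_aug (c d : RibbonLocalRing k) :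
    resAug k n (resDiff k n (c, d)) = 0 := by
  rw [resDiff_apply, resAug_apply]
  have h : epsElt k * epsElt k = 0 := DualNumber.eps_mul_eps
  linear_combination c * h

lemma ker_sub_range (a b : RibbonLocalRing k) (h1 : epsElt k * a + sElt k ^ n * b = 0)
    (h2 : b.fst = 0) : (a, b) ∈ LinearMap.range (resDiff k n) := by
  have hf : a.fst + X ^ n * b.snd = 0 := by
    have := congrArg TrivSqZeroExt.snd h1
    rwa [snd_add, eps_mul_snd, sn_mul_snd, snd_zero] at this
  refine ⟨(inl a.snd, inl (-b.snd)), ?_⟩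
  rw [resDiff_apply]
  refine Prod.ext (TrivSqZeroExt.ext ?_ ?_) (TrivSqZeroExt.ext ?_ ?_)
  · simp only [fst_add, eps_mul_fst, sn_mul_fst, fst_inl, zero_add]
    linear_combination -hf
  · simp only [snd_add, eps_mul_snd, sn_mul_snd, fst_inl, snd_inl, mul_zero, add_zero]
  · simp only [fst_neg, eps_mul_fst, neg_zero, h2]
  · simp only [snd_neg, eps_mul_snd, fst_inl, neg_neg]

lemma goal2 : LinearMap.ker (resAug k n) = LinearMap.range (resDiff k n) := by
  apply le_antisymm
  · rintro ⟨a, b⟩ h1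
    rw [LinearMap.mem_ker, resAug_apply] at h1
    have h2 : b.fst = 0 := by
      have := congrArg TrivSqZeroExt.fst h1
      rw [fst_add, eps_mul_fst, sn_mul_fst, zero_add, fst_zero] at this
      exact (mul_eq_zero.mp this).resolve_left (Xn_ne_zero k n)
    exact ker_sub_range k n a b h1 h2
  · rintro z ⟨⟨c, d⟩, rfl⟩
    exact LinearMap.mem_ker.mpr (diff_mem_ker_aug k n c d)

lemma diff_diff (c d : RibbonLocalRing k) :
    resDiff k n (resDiff k n (c, d)) = 0 := by
  have heps : epsElt k * epsElt k = 0 := DualNumber.eps_mul_eps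
  rw [resDiff_apply, resDiff_apply, Prod.mk_eq_zero]
  constructor
  · linear_combination c * heps
  · linear_combination d * heps

lemma goal3 : LinearMap.ker (resDiff k n) = LinearMap.range (resDiff k n) := by
  apply le_antisymm
  · rintro ⟨a, b⟩ h
    rw [LinearMap.mem_ker, resDiff_apply, Prod.mk_eq_zero] at h
    obtain ⟨h1, h3⟩ := h
    have h2 : b.fst = 0 := by
      have := congrArg TrivSqZeroExt.snd h3
      rwa [snd_neg, eps_mul_snd, snd_zero, neg_eq_zero] at this
    exact ker_sub_range k n a b h1 h2
  · rintro z ⟨⟨c, d⟩, rfl⟩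
    exact LinearMap.mem_ker.mpr (diff_diff k n c d)

section Ext
variable (k : Type) [Field k] (n : ℕ)
open PowerSeries

noncomputable def Pol (p : Fin n → k) : PowerSeries k :=
  ∑ i : Fin n, C (p i) * X ^ (i : ℕ)

lemma coeff_Pol (p : Fin n → k) (j : Fin n) : coeff (j : ℕ) (Pol k n p) = p j := by
  rw [Pol, map_sum, Finset.sum_eq_single j]
  · simp [coeff_C_mul, coeff_X_pow]
  · intro i _ hij
    simp only [coeff_C_mul, coeff_X_pow]
    rw [if_neg (fun h => hij (Fin.val_injective h).symm)]
    simp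
  · simp

lemma Pol_add (p q : Fin n → k) : Pol k n (p + q) = Pol k n p + Pol k n q := by
  simp [Pol, Finset.sum_add_distrib, map_add, add_mul]

lemma Pol_smul (c : k) (p : Fin n → k) : Pol k n (c • p) = C c * Pol k n p := by
  simp [Pol, Finset.mul_sum, map_mul, mul_assoc]

lemma Pol_eq_zero_of_dvd (p : Fin n → k) (h : (X : PowerSeries k) ^ n ∣ Pol k n p) :
    p = 0 := by
  funext j
  have := (X_pow_dvd_iff.mp h) j j.2
  rw [coeff_Pol] at this
  simpa using this

lemma sub_Pol_dvd (q : PowerSeries k) :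
    (X : PowerSeries k) ^ n ∣ q - Pol k n (fun i => coeff (i : ℕ) q) := by
  rw [X_pow_dvd_iff]
  intro m hm
  rw [map_sub, coeff_Pol k n _ ⟨m, hm⟩, sub_self]

lemma inr_mem_In (w : PowerSeries k) : (inr w : RibbonLocalRing k) ∈ In k n :=
  (mem_In_iff k n _).2 ⟨0, by rw [fst_inr, mul_zero]⟩

lemma gen_mem_In (c w : PowerSeries k) :
    (inl (X ^ n * c) + inr w : RibbonLocalRing k) ∈ In k n :=
  (mem_In_iff k n _).2 ⟨c, by rw [fst_add, fst_inl, fst_inr, add_zero]⟩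

lemma coe_smul_In (c : RibbonLocalRing k) (x : ↥(In k n)) :
    ((c • x : ↥(In k n)) : RibbonLocalRing k) = c * ↑x := rfl

noncomputable def eltK (q v : PowerSeries k) : ↥(In k n) × ↥(In k n) :=
  (⟨inr q, inr_mem_In k n q⟩, ⟨inl (X ^ n * q) + inr v, gen_mem_In k n q v⟩)

lemma In_ext (x y : ↥(In k n))
    (h1 : (x : RibbonLocalRing k).fst = (y : RibbonLocalRing k).fst)
    (h2 : (x : RibbonLocalRing k).snd = (y : RibbonLocalRing k).snd) : x = y :=
  Subtype.ext (TrivSqZeroExt.ext h1 h2)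

lemma eltK_mem_ker (q v : PowerSeries k) :
    eltK k n q v ∈ LinearMap.ker (extDiff k n) := by
  rw [LinearMap.mem_ker, eltK, extDiff_apply, Prod.mk_eq_zero]
  constructor
  · refine In_ext k n _ _ ?_ ?_ <;>
      simp only [coe_smul_In, ZeroMemClass.coe_zero, eps_mul_fst, eps_mul_snd,
        fst_zero, snd_zero, fst_inr, snd_inr]
  · refine In_ext k n _ _ ?_ ?_ <;>
      simp only [coe_smul_In, AddSubgroupClass.coe_sub, fst_sub, snd_sub, sn_mul_fst,
        sn_mul_snd, eps_mul_fst, eps_mul_snd, fst_inr, snd_inr, fst_add, snd_add, fst_inl,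
        snd_inl, ZeroMemClass.coe_zero, fst_zero, snd_zero, mul_zero, add_zero, sub_self,
        sub_zero, zero_add]

end Ext

section Ext2
variable (k : Type) [Field k] (n : ℕ)
open PowerSeries

lemma eltK_add (q v q' v' : PowerSeries k) :
    eltK k n (q + q') (v + v') = eltK k n q v + eltK k n q' v' := by
  refine Prod.ext (In_ext k n _ _ ?_ ?_) (In_ext k n _ _ ?_ ?_) <;>
    simp [eltK, mul_add]

lemma algMap_eq (c : k) :
    algebraMap k (RibbonLocalRing k) c = inl (C c) := by
  rw [algebraMap_eq_inl', ← C_eq_algebraMap]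

lemma eltK_algSmul (c : k) (q v : PowerSeries k) :
    algebraMap k (RibbonLocalRing k) c • eltK k n q v
      = eltK k n (C c * q) (C c * v) := by
  refine Prod.ext (In_ext k n _ _ ?_ ?_) (In_ext k n _ _ ?_ ?_) <;>
    simp [eltK, coe_smul_In, algMap_eq, fst_mul, snd_mul, op_smul_eq_mul, smul_eq_mul,
      mul_add] <;> ring

noncomputable def toKer (pr : (Fin n → k) × (Fin n → k)) :
    ↥(LinearMap.ker (extDiff k n)) :=
  ⟨eltK k n (Pol k n pr.1) (Pol k n pr.2), eltK_mem_ker k n _ _⟩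

noncomputable def Phi : ((Fin n → k) × (Fin n → k)) →ₗ[k] Ext1In k n where
  toFun pr := homologyMk (toKer k n pr)
  map_add' pr pr' := by
    have h : toKer k n (pr + pr') = toKer k n pr + toKer k n pr' := by
      apply Subtype.ext
      show eltK k n (Pol k n (pr.1 + pr'.1)) (Pol k n (pr.2 + pr'.2)) =
        eltK k n (Pol k n pr.1) (Pol k n pr.2) + eltK k n (Pol k n pr'.1) (Pol k n pr'.2)
      rw [Pol_add, Pol_add, eltK_add]
    rw [h, homology_mk_add]
  map_smul' c pr := by
    have h : toKer k n (c • pr) = algebraMap k (RibbonLocalRing k) c • toKer k n pr := by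
      apply Subtype.ext
      show eltK k n (Pol k n (c • pr.1)) (Pol k n (c • pr.2)) =
        algebraMap k (RibbonLocalRing k) c • eltK k n (Pol k n pr.1) (Pol k n pr.2)
      rw [Pol_smul, Pol_smul, eltK_algSmul]
    rw [h, RingHom.id_apply, ← homology_smul_mk]

lemma Phi_apply (pr : (Fin n → k) × (Fin n → k)) :
    Phi k n pr = homologyMk (toKer k n pr) := rfl

lemma Phi_injective : Function.Injective (Phi k n) := by
  refine (injective_iff_map_eq_zero _).mpr ?_
  rintro ⟨p, r⟩ h
  rw [Phi_apply, homology_mk_eq_zero_iff, Submodule.mem_comap] at h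
  obtain ⟨⟨u, w⟩, huw⟩ := h
  rw [extDiff_apply] at huw
  have huw1 := congrArg (fun t : ↥(In k n) × ↥(In k n) =>
    ((t.1 : RibbonLocalRing k)).snd) huw
  have huw2 := congrArg (fun t : ↥(In k n) × ↥(In k n) =>
    ((t.2 : RibbonLocalRing k)).snd) huw
  simp only [toKer, eltK, coe_smul_In, AddSubgroupClass.coe_sub, snd_sub, eps_mul_snd,
    sn_mul_snd, Submodule.coe_subtype, fst_inr, snd_inr, fst_add, snd_add, fst_inl,
    snd_inl, zero_add] at huw1 huw2
  obtain ⟨cu, hcu⟩ := (mem_In_iff k n _).1 u.2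
  obtain ⟨cw, hcw⟩ := (mem_In_iff k n _).1 w.2
  have hp : p = 0 := Pol_eq_zero_of_dvd k n p ⟨cu, by rw [← huw1, hcu]⟩
  have hr : r = 0 := Pol_eq_zero_of_dvd k n r
    ⟨(u : RibbonLocalRing k).snd - cw, by linear_combination -huw2 - hcw⟩
  rw [hp, hr]
  rfl

lemma Phi_surjective : Function.Surjective (Phi k n) := by
  intro t
  obtain ⟨z, rfl⟩ := homology_mk_surjective (extDiff k n) t
  obtain ⟨h1, h2⟩ : epsElt k • (↑z : ↥(In k n) × ↥(In k n)).1 = 0 ∧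
      sElt k ^ n • (↑z : ↥(In k n) × ↥(In k n)).1 - epsElt k • (↑z : ↥(In k n) × ↥(In k n)).2 = 0 := by
    have hz := z.2
    rw [LinearMap.mem_ker, ← Prod.mk.eta (p := (↑z : ↥(In k n) × ↥(In k n))),
      extDiff_apply, Prod.mk_eq_zero] at hz
    exact hz
  set x := (↑z : ↥(In k n) × ↥(In k n)).1 with hxd
  set y := (↑z : ↥(In k n) × ↥(In k n)).2 with hyd
  have hx : (x : RibbonLocalRing k).fst = 0 := by
    have := congrArg (fun w : ↥(In k n) => ((w : RibbonLocalRing k)).snd) h1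
    simpa only [coe_smul_In, eps_mul_snd, ZeroMemClass.coe_zero, snd_zero] using this
  set q := (x : RibbonLocalRing k).snd with hqd
  set v := (y : RibbonLocalRing k).snd with hvd
  have hy : (y : RibbonLocalRing k).fst = X ^ n * q := by
    have := congrArg (fun w : ↥(In k n) => ((w : RibbonLocalRing k)).snd) h2
    simp only [coe_smul_In, AddSubgroupClass.coe_sub, snd_sub, sn_mul_snd, eps_mul_snd,
      ZeroMemClass.coe_zero, snd_zero] at this
    linear_combination -this
  obtain ⟨a, ha⟩ := sub_Pol_dvd k n q
  obtain ⟨b, hb⟩ := sub_Pol_dvd k n v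
  set p : Fin n → k := fun i => coeff (i : ℕ) q with hpd
  set r : Fin n → k := fun i => coeff (i : ℕ) v with hrd
  refine ⟨(p, r), ?_⟩
  rw [Phi_apply, homology_mk_eq_iff, Submodule.mem_comap]
  refine ⟨(⟨inl (X ^ n * (-a)) + inr (-b), gen_mem_In k n _ _⟩, 0), ?_⟩
  rw [extDiff_apply]
  have hcoe : (LinearMap.ker (extDiff k n)).subtype (toKer k n (p, r) - z) =
      (↑(toKer k n (p, r)) : ↥(In k n) × ↥(In k n)) - (↑z : ↥(In k n) × ↥(In k n)) := rfl
  rw [hcoe]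
  refine Prod.ext (In_ext k n _ _ ?_ ?_) (In_ext k n _ _ ?_ ?_)
  · simp only [toKer, eltK, coe_smul_In, Prod.fst_sub, AddSubgroupClass.coe_sub,
      fst_sub, eps_mul_fst, fst_add, fst_inl, fst_inr, ← hxd, hx]
    ring
  · simp only [toKer, eltK, coe_smul_In, Prod.fst_sub, AddSubgroupClass.coe_sub,
      snd_sub, eps_mul_snd, fst_add, fst_inl, fst_inr, snd_inr, ← hxd, ← hqd, add_zero]
    linear_combination ha
  · simp only [toKer, eltK, coe_smul_In, Prod.snd_sub, AddSubgroupClass.coe_sub,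
      fst_sub, sn_mul_fst, eps_mul_fst, smul_zero, ZeroMemClass.coe_zero, fst_zero,
      sub_zero, fst_add, fst_inl, fst_inr, add_zero, ← hyd, hy]
    linear_combination (X : PowerSeries k) ^ n * ha
  · simp only [toKer, eltK, coe_smul_In, Prod.snd_sub, AddSubgroupClass.coe_sub,
      snd_sub, sn_mul_snd, eps_mul_snd, smul_zero, ZeroMemClass.coe_zero, snd_zero,
      sub_zero, snd_add, snd_inl, snd_inr, zero_add, ← hyd, ← hvd]
    linear_combination hb

lemma goal4 : Module.finrank k (Ext1In k n) = 2 * n := by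
  have e : ((Fin n → k) × (Fin n → k)) ≃ₗ[k] Ext1In k n :=
    LinearEquiv.ofBijective (Phi k n) ⟨Phi_injective k n, Phi_surjective k n⟩
  rw [← e.finrank_eq, Module.finrank_prod, Module.finrank_fin_fun, two_mul]

end Ext2


/-- The 2-periodic complex `⋯ → O₀² → O₀² → O₀² → I_n → 0` with differentials
`[[ε, sⁿ], [0, -ε]]` and augmentation `(a, b) ↦ a ε + b sⁿ` is a free resolution of
`I_n = (sⁿ, ε)`, and `dim_k Ext¹_{O₀}(I_n, I_n) = 2 n`. -/
theorem free_resolution_and_ext_dim (k : Type) [Field k] (n : ℕ) (hn : 1 ≤ n) :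
    LinearMap.range (resAug k n) = (In k n : Submodule (RibbonLocalRing k)
        (RibbonLocalRing k)) ∧
    LinearMap.ker (resAug k n) = LinearMap.range (resDiff k n) ∧
    LinearMap.ker (resDiff k n) = LinearMap.range (resDiff k n) ∧
    Module.finrank k (Ext1In k n) = 2 * n :=
  ⟨goal1 k n, goal2 k n, goal3 k n, goal4 k n⟩
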